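/- The transformations g3 and g7 satisfy the relation g3 ∘ g7 ∘ g3^{-1} = g7^2; consequently the group generated by g3 and g7 is a non-abelian group of order 21. -/

import Mathlib

open Complex

noncomputable def xi : ℂ := Complex.exp (2 * Real.pi * Complex.I / 7)

def w7 : Fin 10 → ℕ := ![0, 6, 5, 3, 1, 2, 4, 1, 2, 4]

def tau : Fin 10 → Fin 10 := ![0, 2, 3, 1, 5, 6, 4, 8, 9, 7]

noncomputable def sigmaPerm : Equiv.Perm (Fin 10) := Equiv.ofBijective tau (by decide)

/-- `g7` as a bijective transformation of `ℂ^10`. -/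
noncomputable def g7e : Equiv.Perm (Fin 10 → ℂ) :=
  Equiv.piCongrRight fun i =>
    Equiv.mulLeft₀ (xi ^ w7 i) (pow_ne_zero _ (Complex.exp_ne_zero _))

/-- `g3` as a bijective transformation of `ℂ^10`, `u ↦ u ∘ tau`. -/
noncomputable def g3e : Equiv.Perm (Fin 10 → ℂ) := Equiv.arrowCongr sigmaPerm.symm (Equiv.refl ℂ)

lemma hprim : IsPrimitiveRoot xi 7 := by
  have := Complex.isPrimitiveRoot_exp 7 (by norm_num)
  simpa [xi] using this

lemma hxi7 : xi ^ 7 = 1 := hprim.pow_eq_one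

lemma g7e_apply (u : Fin 10 → ℂ) (m : Fin 10) : g7e u m = xi ^ w7 m * u m := rfl

lemma g3e_apply (u : Fin 10 → ℂ) (m : Fin 10) : g3e u m = u (tau m) := rfl

lemma g7e_pow_apply (n : ℕ) (u : Fin 10 → ℂ) (m : Fin 10) :
    (g7e ^ n) u m = xi ^ (w7 m * n) * u m := by
  induction n generalizing u with
  | zero => simp
  | succ n ih =>
    rw [pow_succ, Equiv.Perm.mul_apply, ih, g7e_apply, ← mul_assoc, ← pow_add]
    ring_nf

lemma g3e_pow_apply (n : ℕ) (u : Fin 10 → ℂ) (m : Fin 10) :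
    (g3e ^ n) u m = u (tau^[n] m) := by
  induction n generalizing u with
  | zero => simp
  | succ n ih =>
    rw [pow_succ, Equiv.Perm.mul_apply, ih, g3e_apply, Function.iterate_succ_apply']

lemma A7 : g7e ^ 7 = 1 := by
  ext u m
  rw [g7e_pow_apply, mul_comm (w7 m), pow_mul, hxi7, one_pow, one_mul]
  rfl

lemma B3 : g3e ^ 3 = 1 := by
  ext u m
  rw [g3e_pow_apply]
  have h : ∀ m, tau^[3] m = m := by decide
  rw [h]; rfl

lemma relR : g3e * g7e = g7e ^ 2 * g3e := by
  ext u m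
  rw [Equiv.Perm.mul_apply, Equiv.Perm.mul_apply, g3e_apply, g7e_apply,
    g7e_pow_apply, g3e_apply]
  have h : ∀ m, w7 (tau m) = (w7 m * 2) % 7 := by decide
  rw [h, ← pow_eq_pow_mod _ hxi7]

lemma comm_pow (n : ℕ) : g3e * g7e ^ n = g7e ^ (2 * n) * g3e := by
  induction n with
  | zero => simp
  | succ n ih =>
    calc g3e * g7e ^ (n + 1) = (g3e * g7e ^ n) * g7e := by rw [pow_succ, mul_assoc]
    _ = g7e ^ (2 * n) * (g3e * g7e) := by rw [ih, mul_assoc]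
    _ = g7e ^ (2 * n) * (g7e ^ 2 * g3e) := by rw [relR]
    _ = g7e ^ (2 * (n + 1)) * g3e := by rw [← mul_assoc, ← pow_add]; ring_nf

lemma comm_pow_pow (j k : ℕ) : g3e ^ j * g7e ^ k = g7e ^ (2 ^ j * k) * g3e ^ j := by
  induction j with
  | zero => simp
  | succ j ih =>
    calc g3e ^ (j + 1) * g7e ^ k = g3e * (g3e ^ j * g7e ^ k) := by
          rw [pow_succ', mul_assoc]
    _ = g3e * g7e ^ (2 ^ j * k) * g3e ^ j := by rw [ih, mul_assoc]
    _ = g7e ^ (2 * (2 ^ j * k)) * g3e * g3e ^ j := by rw [comm_pow]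
    _ = g7e ^ (2 ^ (j + 1) * k) * g3e ^ (j + 1) := by
          rw [mul_assoc, ← pow_succ']; ring_nf

lemma prod_form (i j k l : ℕ) :
    (g7e ^ i * g3e ^ j) * (g7e ^ k * g3e ^ l) = g7e ^ (i + 2 ^ j * k) * g3e ^ (j + l) := by
  calc (g7e ^ i * g3e ^ j) * (g7e ^ k * g3e ^ l)
      = g7e ^ i * (g3e ^ j * g7e ^ k) * g3e ^ l := by
        rw [mul_assoc, mul_assoc, mul_assoc]
    _ = g7e ^ i * (g7e ^ (2 ^ j * k) * g3e ^ j) * g3e ^ l := by rw [comm_pow_pow]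
    _ = g7e ^ (i + 2 ^ j * k) * g3e ^ (j + l) := by
        rw [pow_add, pow_add, mul_assoc, mul_assoc, mul_assoc]

noncomputable def Hgrp : Subgroup (Equiv.Perm (Fin 10 → ℂ)) where
  carrier := {x | ∃ i j : ℕ, x = g7e ^ i * g3e ^ j}
  one_mem' := ⟨0, 0, by simp⟩
  mul_mem' := by
    rintro x y ⟨i, j, rfl⟩ ⟨k, l, rfl⟩
    exact ⟨i + 2 ^ j * k, j + l, prod_form i j k l⟩
  inv_mem' := by
    rintro x ⟨i, j, rfl⟩
    refine ⟨2 ^ (2 * j) * (6 * i), 2 * j, ?_⟩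
    have key : (g7e ^ i * g3e ^ j) * (g7e ^ (2 ^ (2 * j) * (6 * i)) * g3e ^ (2 * j)) = 1 := by
      rw [prod_form]
      have e1 : g3e ^ (j + 2 * j) = 1 := by
        rw [show j + 2 * j = 3 * j by ring, pow_mul, B3, one_pow]
      have hmod : (i + 2 ^ j * (2 ^ (2 * j) * (6 * i))) % 7 = 0 := by
        have h2 : i + 2 ^ j * (2 ^ (2 * j) * (6 * i)) = i + 8 ^ j * (6 * i) := by
          rw [← mul_assoc, ← pow_add, show j + 2 * j = 3 * j by ring, pow_mul]
          norm_num
        have h8 : (8 : ℕ) ^ j ≡ 1 [MOD 7] := by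
          calc (8 : ℕ) ^ j ≡ 1 ^ j [MOD 7] := Nat.ModEq.pow j (by decide)
          _ = 1 := one_pow j
        have h3 : i + 8 ^ j * (6 * i) ≡ i + 1 * (6 * i) [MOD 7] :=
          (Nat.ModEq.refl i).add (h8.mul_right (6 * i))
        have h4 : i + 1 * (6 * i) = 7 * i := by ring
        have := h3
        rw [h4] at this
        rw [h2]
        calc (i + 8 ^ j * (6 * i)) % 7 = (7 * i) % 7 := this
        _ = 0 := Nat.mul_mod_right 7 i
      have e2 : g7e ^ (i + 2 ^ j * (2 ^ (2 * j) * (6 * i))) = 1 := by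
        rw [pow_eq_pow_mod _ A7, hmod, pow_zero]
      rw [e1, e2, one_mul]
    exact inv_eq_of_mul_eq_one_right key

lemma closure_eq : Subgroup.closure ({g3e, g7e} : Set (Equiv.Perm (Fin 10 → ℂ))) = Hgrp := by
  apply le_antisymm
  · rw [Subgroup.closure_le]
    rintro x (rfl | rfl)
    · exact ⟨0, 1, by simp⟩
    · exact ⟨1, 0, by simp⟩
  · rintro x ⟨i, j, rfl⟩
    exact mul_mem (pow_mem (Subgroup.subset_closure (by simp)) i)
      (pow_mem (Subgroup.subset_closure (by simp)) j)

noncomputable def e1v : Fin 10 → ℂ := fun m => if m = 1 then 1 else 0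

lemma apply_eval (i j : ℕ) (m : Fin 10) :
    (g7e ^ i * g3e ^ j) e1v m = xi ^ (w7 m * i) * (if tau^[j] m = 1 then 1 else 0) := by
  rw [Equiv.Perm.mul_apply, g7e_pow_apply, g3e_pow_apply]
  rfl

def pt : Fin 3 → Fin 10 := ![1, 3, 2]

lemma pt_supp : ∀ j : Fin 3, tau^[(j : ℕ)] (pt j) = 1 := by decide

lemma pt_distinct : ∀ j l : Fin 3, tau^[(l : ℕ)] (pt j) = 1 → j = l := by decide

lemma xi_ne_zero : xi ≠ 0 := Complex.exp_ne_zero _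

noncomputable def fcnt : Fin 7 × Fin 3 → Hgrp := fun p =>
  ⟨g7e ^ (p.1 : ℕ) * g3e ^ (p.2 : ℕ), (p.1 : ℕ), (p.2 : ℕ), rfl⟩

lemma fcnt_bij : Function.Bijective fcnt := by
  constructor
  · rintro ⟨i1, j1⟩ ⟨i2, j2⟩ h
    have h' : g7e ^ (i1 : ℕ) * g3e ^ (j1 : ℕ) = g7e ^ (i2 : ℕ) * g3e ^ (j2 : ℕ) :=
      congrArg Subtype.val h
    have hv : ∀ m, (g7e ^ (i1 : ℕ) * g3e ^ (j1 : ℕ)) e1v m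
        = (g7e ^ (i2 : ℕ) * g3e ^ (j2 : ℕ)) e1v m := fun m => by rw [h']
    -- first show j1 = j2
    have hj : j1 = j2 := by
      have := hv (pt j1)
      rw [apply_eval, apply_eval, if_pos (pt_supp j1)] at this
      by_cases hc : tau^[(j2 : ℕ)] (pt j1) = 1
      · exact pt_distinct _ _ hc
      · rw [if_neg hc, mul_zero, mul_one] at this
        exact absurd this (pow_ne_zero _ xi_ne_zero)
    subst hj
    have hA : g7e ^ (i1 : ℕ) = g7e ^ (i2 : ℕ) := mul_right_cancel h'
    have he : xi ^ (6 * (i1 : ℕ)) = xi ^ (6 * (i2 : ℕ)) := by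
      have := congrFun (DFunLike.congr_fun hA e1v) 1
      rw [g7e_pow_apply, g7e_pow_apply] at this
      have hw : w7 1 = 6 := by decide
      simpa [hw, e1v, mul_comm] using this
    have hmod : 6 * (i1 : ℕ) ≡ 6 * (i2 : ℕ) [MOD 7] := by
      have h1 := pow_eq_pow_mod (6 * (i1 : ℕ)) hxi7
      have h2 := pow_eq_pow_mod (6 * (i2 : ℕ)) hxi7
      rw [h1, h2] at he
      exact hprim.pow_inj (Nat.mod_lt _ (by norm_num)) (Nat.mod_lt _ (by norm_num)) he
    have hik : (i1 : ℕ) ≡ (i2 : ℕ) [MOD 7] :=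
      Nat.ModEq.cancel_left_of_coprime (by decide) hmod
    have : (i1 : ℕ) = (i2 : ℕ) := by
      have := hik
      unfold Nat.ModEq at this
      rwa [Nat.mod_eq_of_lt i1.isLt, Nat.mod_eq_of_lt i2.isLt] at this
    exact Prod.ext (Fin.ext this) rfl
  · rintro ⟨x, i, j, rfl⟩
    refine ⟨(⟨i % 7, Nat.mod_lt _ (by norm_num)⟩, ⟨j % 3, Nat.mod_lt _ (by norm_num)⟩), ?_⟩
    apply Subtype.ext
    show g7e ^ (i % 7) * g3e ^ (j % 3) = g7e ^ i * g3e ^ j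
    rw [← pow_eq_pow_mod i A7, ← pow_eq_pow_mod j B3]

/-- `g3 ∘ g7 ∘ g3⁻¹ = g7²`, and the group generated by `g3` and `g7` is a
non-abelian group of order `21`. -/
theorem g3_g7_relation_and_group_order :
    g3e * g7e * g3e⁻¹ = g7e ^ 2 ∧
    Nat.card (Subgroup.closure ({g3e, g7e} : Set (Equiv.Perm (Fin 10 → ℂ)))) = 21 ∧
    ¬ (∀ a b : Subgroup.closure ({g3e, g7e} : Set (Equiv.Perm (Fin 10 → ℂ))),
        a * b = b * a) := by
  refine ⟨mul_inv_eq_iff_eq_mul.mpr relR, ?_, ?_⟩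
  · rw [closure_eq, ← Nat.card_eq_of_bijective fcnt fcnt_bij]
    simp [Nat.card_eq_fintype_card]
  · intro hcomm
    have h3 : g3e ∈ Subgroup.closure ({g3e, g7e} : Set (Equiv.Perm (Fin 10 → ℂ))) :=
      Subgroup.subset_closure (by simp)
    have h7 : g7e ∈ Subgroup.closure ({g3e, g7e} : Set (Equiv.Perm (Fin 10 → ℂ))) :=
      Subgroup.subset_closure (by simp)
    have := hcomm ⟨g3e, h3⟩ ⟨g7e, h7⟩
    have hc : g3e * g7e = g7e * g3e := congrArg Subtype.val this
    rw [relR] at hc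
    have : g7e ^ 2 = g7e := mul_right_cancel hc
    rw [pow_two] at this
    have h1 : g7e = 1 := mul_right_cancel (this.trans (one_mul g7e).symm)
    have := congrFun (DFunLike.congr_fun h1 e1v) 1
    rw [g7e_apply] at this
    have hw : w7 1 = 6 := by decide
    have hone : e1v 1 = 1 := by simp [e1v]
    rw [hw, hone, mul_one] at this
    have : xi ^ 6 = 1 := by simpa [hone] using this
    exact hprim.pow_ne_one_of_pos_of_lt (by norm_num) (by norm_num) this
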